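/- With e, η, the contraction • and the interior product ⌟ as in the context, let f : Fin 4 → Fin 4 → Fin 4 → E satisfy f a b j = −f b a j and ⟪f a b j, e k⟫ = 0 for all indices (f is antisymmetric in its first two arguments and normal-valued), and define the 2-vector-valued 2-form Rn a b := ∑ⱼ (f a b j)∧(e j). Then for every c ∈ Fin 4: ((1/2)·∑_{a,b} (η a b)•(Rn a b)) ⌟ (e c) = ∑_a (Rn a c) ⌟ (e a). -/

import Mathlib

open scoped RealInnerProductSpace Matrix

/-- For a normal-valued 2-form `Rn a b = ∑ⱼ (f a b j)∧(e j)`, the interior contraction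
of `(1/2)·∑_{a,b} (η a b)•(Rn a b)` with `e c` equals `∑_a (Rn a c) ⌟ (e a)`. -/
theorem stmt_12 (m : ℕ) (hm : 1 ≤ m)
    (e : Fin 4 → EuclideanSpace ℝ (Fin m)) (he : Orthonormal ℝ e)
    (wedge : EuclideanSpace ℝ (Fin m) → EuclideanSpace ℝ (Fin m) → Matrix (Fin m) (Fin m) ℝ)
    (hwedge : ∀ x y i j, wedge x y i j = x i * y j - y i * x j)
    (bullet : Matrix (Fin m) (Fin m) ℝ → Matrix (Fin m) (Fin m) ℝ → Matrix (Fin m) (Fin m) ℝ)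
    (hbullet : ∀ X Y, bullet X Y = Y * X - X * Y)
    (interior : Matrix (Fin m) (Fin m) ℝ → EuclideanSpace ℝ (Fin m) → EuclideanSpace ℝ (Fin m))
    (hinterior : ∀ X c i, interior X c i = ∑ j : Fin m, X j i * c j)
    (η : Fin 4 → Fin 4 → Matrix (Fin m) (Fin m) ℝ)
    (hη : ∀ a b, η a b = wedge (e a) (e b))
    (f : Fin 4 → Fin 4 → Fin 4 → EuclideanSpace ℝ (Fin m))
    (hf_anti : ∀ a b j, f a b j = -f b a j)
    (hf_normal : ∀ a b j k, ⟪f a b j, e k⟫ = 0)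
    (Rn : Fin 4 → Fin 4 → Matrix (Fin m) (Fin m) ℝ)
    (hRn : ∀ a b, Rn a b = ∑ j : Fin 4, wedge (f a b j) (e j)) :
    ∀ c, interior ((1 / 2 : ℝ) • ∑ a : Fin 4, ∑ b : Fin 4, bullet (η a b) (Rn a b)) (e c)
      = ∑ a : Fin 4, interior (Rn a c) (e a) := by
  intro c
  -- coordinate versions of the orthonormality / normality hypotheses
  have hinner : ∀ a b : Fin 4, (∑ k, e a k * e b k) = if a = b then 1 else 0 := by
    intro a b
    have h := orthonormal_iff_ite.mp he a b
    simpa [PiLp.inner_apply, RCLike.inner_apply, conj_trivial, mul_comm] using h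
  have hfe : ∀ a b j (d : Fin 4), (∑ k, e d k * f a b j k) = 0 := by
    intro a b j d
    have h := hf_normal a b j d
    have h' : (∑ k, f a b j k * e d k) = 0 := by
      simpa [PiLp.inner_apply, RCLike.inner_apply, conj_trivial, mul_comm] using h
    simpa [mul_comm] using h'
  have hfe' : ∀ a b j (d : Fin 4), (∑ k, f a b j k * e d k) = 0 := by
    intro a b j d
    simpa [mul_comm] using hfe a b j d
  -- wedge is antisymmetric / negation in the first slot
  have wedge_swap : ∀ x y, wedge x y = - wedge y x := by
    intro x y; ext i j; simp [hwedge]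
  have wedge_neg : ∀ x y, wedge (-x) y = - wedge x y := by
    intro x y; ext i j; simp [hwedge, PiLp.neg_apply]; ring_nf
  -- contraction of two wedges
  have contraction : ∀ x y u v : EuclideanSpace ℝ (Fin m),
      bullet (wedge x y) (wedge u v)
        = (∑ k, x k * u k) • wedge y v - (∑ k, y k * u k) • wedge x v
          - (∑ k, x k * v k) • wedge y u + (∑ k, y k * v k) • wedge x u := by
    intro x y u v
    rw [hbullet]
    ext i j
    simp only [Matrix.sub_apply, Matrix.add_apply, Matrix.smul_apply, Matrix.mul_apply,
      hwedge, smul_eq_mul]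
    rw [← Finset.sum_sub_distrib, Finset.sum_mul, Finset.sum_mul, Finset.sum_mul, Finset.sum_mul,
      ← Finset.sum_sub_distrib, ← Finset.sum_sub_distrib, ← Finset.sum_add_distrib]
    exact Finset.sum_congr rfl fun k _ => by ring
  have bullet_sum : ∀ (X : Matrix (Fin m) (Fin m) ℝ) (Y : Fin 4 → Matrix (Fin m) (Fin m) ℝ),
      bullet X (∑ j, Y j) = ∑ j, bullet X (Y j) := by
    intro X Y
    simp [hbullet, Finset.sum_mul, Finset.mul_sum, Finset.sum_sub_distrib]
  -- the key simplification of each bullet term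
  have key : ∀ a b, bullet (η a b) (Rn a b)
      = wedge (f a b a) (e b) - wedge (f a b b) (e a) := by
    intro a b
    rw [hRn, bullet_sum]
    have step : ∀ j, bullet (η a b) (wedge (f a b j) (e j))
        = (if a = j then wedge (f a b j) (e b) else 0)
          - (if b = j then wedge (f a b j) (e a) else 0) := by
      intro j
      rw [hη, contraction, hfe, hfe, hinner, hinner, zero_smul, zero_smul,
        wedge_swap (e b) (f a b j), wedge_swap (e a) (f a b j)]
      rcases eq_or_ne a j with h | h <;> rcases eq_or_ne b j with h' | h' <;>
        simp [h, h', smul_neg]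
    simp [step, Finset.sum_sub_distrib, Finset.sum_ite_eq]
  -- the double sum collapses
  have hS : (∑ a : Fin 4, ∑ b : Fin 4, bullet (η a b) (Rn a b))
      = (2:ℝ) • (- ∑ a : Fin 4, ∑ b : Fin 4, wedge (f a b b) (e a)) := by
    simp only [key, Finset.sum_sub_distrib]
    have h1 : (∑ a : Fin 4, ∑ b : Fin 4, wedge (f a b a) (e b))
        = - ∑ a : Fin 4, ∑ b : Fin 4, wedge (f a b b) (e a) := by
      rw [Finset.sum_comm, ← Finset.sum_neg_distrib]
      refine Finset.sum_congr rfl fun x _ => ?_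
      rw [← Finset.sum_neg_distrib]
      refine Finset.sum_congr rfl fun y _ => ?_
      rw [hf_anti y x, wedge_neg]
    rw [h1]
    module
  have happ : ∀ (g : Fin 4 → EuclideanSpace ℝ (Fin m)) (i : Fin m),
      (∑ a, g a) i = ∑ a, g a i := fun g i => by rw [WithLp.ofLp_sum]; exact Finset.sum_apply i Finset.univ _
  have interior_wedge : ∀ x y (z : EuclideanSpace ℝ (Fin m)),
      interior (wedge x y) z = (∑ k, x k * z k) • y - (∑ k, y k * z k) • x := by
    intro x y z; ext i
    simp only [hinterior, hwedge, PiLp.sub_apply, PiLp.smul_apply, smul_eq_mul]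
    rw [Finset.sum_mul, Finset.sum_mul, ← Finset.sum_sub_distrib]
    exact Finset.sum_congr rfl fun k _ => by ring
  have interior_neg : ∀ X (z : EuclideanSpace ℝ (Fin m)),
      interior (-X) z = - interior X z := by
    intro X z; ext i
    simp [hinterior, PiLp.neg_apply, Matrix.neg_apply, Finset.sum_neg_distrib]
  have interior_sumM : ∀ (X : Fin 4 → Matrix (Fin m) (Fin m) ℝ) (z : EuclideanSpace ℝ (Fin m)),
      interior (∑ a, X a) z = ∑ a, interior (X a) z := by
    intro X z; ext i
    rw [happ]
    simp only [hinterior, Matrix.sum_apply, Finset.sum_mul]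
    rw [Finset.sum_comm]
  rw [hS, smul_smul]
  norm_num
  simp only [interior_neg, interior_sumM, hRn, interior_wedge, hfe', hinner]
  simp only [zero_smul, zero_sub, neg_neg, ite_smul, one_smul, Finset.sum_neg_distrib]
  rw [Finset.sum_comm]
  simp only [Finset.sum_ite_eq', Finset.mem_univ, if_true, ← Finset.sum_neg_distrib]
  exact Finset.sum_congr rfl fun b _ => by rw [hf_anti]
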